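/- Define for ε > 0 the set A_ε = {(x,y,z) ∈ ℝ³ : x ≥ |y|, |z| ≤ (ε²/2)(sinh τ + τ), τ = arcosh((x²−y²)/(2ε²)+1)} and A₀ = {(x,y,z) : x ≥ 0, 4|z| ≤ x² − y²}. Then for all 0 < ε₁ < ε₂, A₀ ⊆ A_{ε₁} ⊆ A_{ε₂}. -/

import Mathlib

open Real

/-- Inverse hyperbolic cosine on `[1, ∞)`. -/
noncomputable def arcosh (x : ℝ) : ℝ := Real.log (x + Real.sqrt (x ^ 2 - 1))

/-- Attainable set of the `ε`-Lorentzian problem on the Heisenberg group. -/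
def attainSet (ε : ℝ) : Set (ℝ × ℝ × ℝ) :=
  {p | p.1 ≥ |p.2.1| ∧
    |p.2.2| ≤ ε ^ 2 / 2 *
      (sinh (_root_.arcosh ((p.1 ^ 2 - p.2.1 ^ 2) / (2 * ε ^ 2) + 1))
        + _root_.arcosh ((p.1 ^ 2 - p.2.1 ^ 2) / (2 * ε ^ 2) + 1))}

/-- Attainable set of the limiting sub-Lorentzian problem. -/
def attainSet₀ : Set (ℝ × ℝ × ℝ) :=
  {p | p.1 ≥ 0 ∧ 4 * |p.2.2| ≤ p.1 ^ 2 - p.2.1 ^ 2}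

lemma my_sq_sub_nonneg {u : ℝ} (hu : 1 ≤ u) : 0 ≤ u ^ 2 - 1 := by nlinarith

lemma my_w_pos {u : ℝ} (hu : 1 ≤ u) : 0 < u + Real.sqrt (u ^ 2 - 1) := by
  nlinarith [Real.sqrt_nonneg (u ^ 2 - 1)]

lemma my_w_inv {u : ℝ} (hu : 1 ≤ u) :
    (u + Real.sqrt (u ^ 2 - 1))⁻¹ = u - Real.sqrt (u ^ 2 - 1) := by
  have hsq : Real.sqrt (u ^ 2 - 1) ^ 2 = u ^ 2 - 1 := Real.sq_sqrt (my_sq_sub_nonneg hu)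
  have hw := my_w_pos hu
  exact inv_eq_of_mul_eq_one_right (by nlinarith [hsq])

lemma cosh_arcosh {u : ℝ} (hu : 1 ≤ u) : Real.cosh (_root_.arcosh u) = u := by
  have hw := my_w_pos hu
  rw [_root_.arcosh, Real.cosh_eq, Real.exp_log hw, ← Real.log_inv,
    Real.exp_log (by positivity), my_w_inv hu]
  ring

lemma sinh_arcosh {u : ℝ} (hu : 1 ≤ u) :
    Real.sinh (_root_.arcosh u) = Real.sqrt (u ^ 2 - 1) := by
  have hw := my_w_pos hu
  rw [_root_.arcosh, Real.sinh_eq, ← Real.log_inv,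
    Real.exp_log hw, Real.exp_log (by positivity), my_w_inv hu]
  ring

lemma arcosh_nonneg {u : ℝ} (hu : 1 ≤ u) : 0 ≤ _root_.arcosh u :=
  Real.log_nonneg (by nlinarith [Real.sqrt_nonneg (u ^ 2 - 1)])

lemma arcosh_mono {u v : ℝ} (hu : 1 ≤ u) (huv : u ≤ v) : _root_.arcosh u ≤ _root_.arcosh v := by
  apply Real.log_le_log (my_w_pos hu)
  have : Real.sqrt (u ^ 2 - 1) ≤ Real.sqrt (v ^ 2 - 1) :=
    Real.sqrt_le_sqrt (by nlinarith)
  linarith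

lemma sinh_le_mul_cosh {x : ℝ} (hx : 0 ≤ x) : Real.sinh x ≤ x * Real.cosh x := by
  set f : ℝ → ℝ := fun x => x * Real.cosh x - Real.sinh x with hf
  have hd : ∀ y : ℝ, HasDerivAt f (y * Real.sinh y) y := by
    intro y
    have h : HasDerivAt (fun x : ℝ => x * Real.cosh x) (1 * Real.cosh y + y * Real.sinh y) y :=
      (hasDerivAt_id y).mul (Real.hasDerivAt_cosh y)
    have h2 : HasDerivAt (fun x : ℝ => x * Real.cosh x - Real.sinh x)
        (1 * Real.cosh y + y * Real.sinh y - Real.cosh y) y := h.sub (Real.hasDerivAt_sinh y)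
    convert h2 using 1
    ring
  have hm : MonotoneOn f (Set.Ici 0) := by
    apply monotoneOn_of_deriv_nonneg (convex_Ici 0)
    · exact ((continuous_id.mul Real.continuous_cosh).sub Real.continuous_sinh).continuousOn
    · exact fun y _ => ((hd y).differentiableAt).differentiableWithinAt
    · intro y hy
      rw [interior_Ici] at hy
      rw [(hd y).deriv]
      exact mul_nonneg (le_of_lt hy) (Real.sinh_nonneg_iff.mpr (le_of_lt hy))
  have := hm (Set.self_mem_Ici) hx hx
  simp only [hf, Real.cosh_zero, Real.sinh_zero, mul_one, zero_mul, sub_zero] at this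
  linarith

lemma mul_sinh_le {a b : ℝ} (ha : 0 ≤ a) (hab : a ≤ b) :
    b * Real.sinh a ≤ a * Real.sinh b := by
  rcases eq_or_lt_of_le ha with h | h
  · simp [← h]
  set g : ℝ → ℝ := fun x => Real.sinh x / x with hg
  have hd : ∀ y : ℝ, y ≠ 0 → HasDerivAt g ((Real.cosh y * y - Real.sinh y * 1) / y ^ 2) y :=
    fun y hy => (Real.hasDerivAt_sinh y).div (hasDerivAt_id y) hy
  have hm : MonotoneOn g (Set.Ioi 0) := by
    apply monotoneOn_of_deriv_nonneg (convex_Ioi 0)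
    · exact ContinuousOn.div Real.continuous_sinh.continuousOn continuousOn_id
        (fun x hx => ne_of_gt hx)
    · rw [interior_Ioi]
      exact fun y hy => ((hd y (ne_of_gt hy)).differentiableAt).differentiableWithinAt
    · intro y hy
      rw [interior_Ioi] at hy
      rw [(hd y (ne_of_gt hy)).deriv]
      have := sinh_le_mul_cosh (le_of_lt hy)
      apply div_nonneg (by nlinarith) (sq_nonneg y)
  have hb : (0:ℝ) < b := lt_of_lt_of_le h hab
  have := hm (Set.mem_Ioi.mpr h) (Set.mem_Ioi.mpr hb) hab
  simp only [hg] at this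
  rw [div_le_div_iff₀ h hb] at this
  linarith

lemma cosh_sub_one_half {t : ℝ} : Real.cosh t - 1 = 2 * Real.sinh (t / 2) ^ 2 := by
  have h : Real.cosh (2 * (t / 2)) = Real.cosh (t / 2) ^ 2 + Real.sinh (t / 2) ^ 2 :=
    Real.cosh_two_mul _
  have h2 : Real.cosh (t / 2) ^ 2 = Real.sinh (t / 2) ^ 2 + 1 := Real.cosh_sq _
  have : (2 : ℝ) * (t / 2) = t := by ring
  rw [this] at h
  linarith

lemma mul_cosh_sub_one_le {a b : ℝ} (ha : 0 ≤ a) (hab : a ≤ b) :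
    b * (Real.cosh a - 1) ≤ a * (Real.cosh b - 1) := by
  rw [cosh_sub_one_half, cosh_sub_one_half]
  have h1 := mul_sinh_le (by linarith : (0:ℝ) ≤ a / 2) (by linarith : a / 2 ≤ b / 2)
  have h2 : Real.sinh (a / 2) ≤ Real.sinh (b / 2) := by
    rw [Real.sinh_le_sinh]; linarith
  have h3 : 0 ≤ Real.sinh (a / 2) := Real.sinh_nonneg_iff.mpr (by linarith)
  have h4 : 0 ≤ Real.sinh (b / 2) := le_trans h3 h2
  have p1 := mul_le_mul_of_nonneg_right h1 h3
  have p2 := mul_le_mul_of_nonneg_left h2 (mul_nonneg (by linarith : (0:ℝ) ≤ a / 2) h4)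
  nlinarith [p1, p2]

lemma key_mono {s e₁ e₂ : ℝ} (hs : 0 ≤ s) (he₁ : 0 < e₁) (he : e₁ ≤ e₂) :
    e₁ ^ 2 / 2 * (Real.sinh (_root_.arcosh (s / (2 * e₁ ^ 2) + 1)) + _root_.arcosh (s / (2 * e₁ ^ 2) + 1)) ≤
    e₂ ^ 2 / 2 * (Real.sinh (_root_.arcosh (s / (2 * e₂ ^ 2) + 1)) + _root_.arcosh (s / (2 * e₂ ^ 2) + 1)) := by
  have he₂ : 0 < e₂ := lt_of_lt_of_le he₁ he
  set u₁ : ℝ := s / (2 * e₁ ^ 2) + 1 with hu₁def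
  set u₂ : ℝ := s / (2 * e₂ ^ 2) + 1 with hu₂def
  have hu₁ : 1 ≤ u₁ := by
    rw [hu₁def]
    have h : 0 ≤ s / (2 * e₁ ^ 2) := by positivity
    linarith
  have hu₂ : 1 ≤ u₂ := by
    rw [hu₂def]
    have h : 0 ≤ s / (2 * e₂ ^ 2) := by positivity
    linarith
  have hle : u₂ ≤ u₁ := by
    rw [hu₁def, hu₂def]
    have : s / (2 * e₂ ^ 2) ≤ s / (2 * e₁ ^ 2) := by
      apply div_le_div_of_nonneg_left hs (by positivity)
      nlinarith
    linarith
  -- sinh part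
  have claim1 : e₁ ^ 2 / 2 * Real.sinh (_root_.arcosh u₁) ≤ e₂ ^ 2 / 2 * Real.sinh (_root_.arcosh u₂) := by
    rw [_root_.sinh_arcosh hu₁, _root_.sinh_arcosh hu₂]
    have key : ∀ e : ℝ, 0 < e →
        e ^ 2 / 2 * Real.sqrt ((s / (2 * e ^ 2) + 1) ^ 2 - 1) =
          Real.sqrt (s ^ 2 / 16 + e ^ 2 * s / 4) := by
      intro e he
      rw [show s ^ 2 / 16 + e ^ 2 * s / 4 =
          (e ^ 2 / 2) ^ 2 * ((s / (2 * e ^ 2) + 1) ^ 2 - 1) by field_simp; ring,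
        Real.sqrt_mul (sq_nonneg _), Real.sqrt_sq (by positivity)]
    rw [hu₁def, hu₂def, key e₁ he₁, key e₂ he₂]
    apply Real.sqrt_le_sqrt
    have hee : e₁ ^ 2 ≤ e₂ ^ 2 := by nlinarith
    nlinarith [hee, hs]
  -- arcosh part
  have claim2 : e₁ ^ 2 / 2 * _root_.arcosh u₁ ≤ e₂ ^ 2 / 2 * _root_.arcosh u₂ := by
    rcases eq_or_lt_of_le hs with h0 | h0
    · have h₁ : u₁ = 1 := by rw [hu₁def, ← h0]; simp
      have h₂ : u₂ = 1 := by rw [hu₂def, ← h0]; simp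
      have : _root_.arcosh 1 = 0 := by simp [_root_.arcosh]
      rw [h₁, h₂, this]; simp
    · set σ := _root_.arcosh u₂ with hσ
      set τ := _root_.arcosh u₁ with hτ
      have hσ0 : 0 ≤ σ := _root_.arcosh_nonneg hu₂
      have hστ : σ ≤ τ := arcosh_mono hu₂ hle
      have hc := mul_cosh_sub_one_le hσ0 hστ
      rw [_root_.cosh_arcosh hu₁, _root_.cosh_arcosh hu₂] at hc
      have h1 : u₁ - 1 = s / (2 * e₁ ^ 2) := by rw [hu₁def]; ring
      have h2 : u₂ - 1 = s / (2 * e₂ ^ 2) := by rw [hu₂def]; ring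
      rw [h1, h2] at hc
      have h2e₁ : (0:ℝ) < 2 * e₁ ^ 2 := by positivity
      have h2e₂ : (0:ℝ) < 2 * e₂ ^ 2 := by positivity
      rw [← mul_div_assoc, ← mul_div_assoc, div_le_div_iff₀ h2e₂ h2e₁] at hc
      nlinarith [hc, h0]
  calc e₁ ^ 2 / 2 * (Real.sinh (_root_.arcosh u₁) + _root_.arcosh u₁)
      = e₁ ^ 2 / 2 * Real.sinh (_root_.arcosh u₁) + e₁ ^ 2 / 2 * _root_.arcosh u₁ := by ring
    _ ≤ e₂ ^ 2 / 2 * Real.sinh (_root_.arcosh u₂) + e₂ ^ 2 / 2 * _root_.arcosh u₂ :=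
        add_le_add claim1 claim2
    _ = e₂ ^ 2 / 2 * (Real.sinh (_root_.arcosh u₂) + _root_.arcosh u₂) := by ring

theorem stmt_8 (ε₁ ε₂ : ℝ) (h₁ : 0 < ε₁) (h₂ : ε₁ < ε₂) :
    attainSet₀ ⊆ attainSet ε₁ ∧ attainSet ε₁ ⊆ attainSet ε₂ := by
  constructor
  · rintro ⟨x, y, z⟩ ⟨hx, hz⟩
    simp only [attainSet₀, Set.mem_setOf_eq] at hx hz
    have habs : 0 ≤ |z| := abs_nonneg z
    have hy2 : y ^ 2 ≤ x ^ 2 := by nlinarith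
    constructor
    · show x ≥ |y|
      nlinarith [sq_abs y, abs_nonneg y]
    · show |z| ≤ ε₁ ^ 2 / 2 * (Real.sinh (_root_.arcosh ((x ^ 2 - y ^ 2) / (2 * ε₁ ^ 2) + 1))
        + _root_.arcosh ((x ^ 2 - y ^ 2) / (2 * ε₁ ^ 2) + 1))
      set t : ℝ := (x ^ 2 - y ^ 2) / (2 * ε₁ ^ 2) with htdef
      have ht : 0 ≤ t := by
        rw [htdef]
        exact div_nonneg (by nlinarith) (by positivity)
      have hu : (1:ℝ) ≤ t + 1 := by linarith
      have h1 : t ≤ Real.sinh (_root_.arcosh (t + 1)) := by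
        rw [_root_.sinh_arcosh hu]
        rw [show (t + 1) ^ 2 - 1 = t ^ 2 + 2 * t by ring]
        calc t = Real.sqrt (t ^ 2) := (Real.sqrt_sq ht).symm
          _ ≤ Real.sqrt (t ^ 2 + 2 * t) := Real.sqrt_le_sqrt (by linarith)
      have h2 : 0 ≤ _root_.arcosh (t + 1) := _root_.arcosh_nonneg hu
      have h3 : ε₁ ^ 2 / 2 * t = (x ^ 2 - y ^ 2) / 4 := by
        rw [htdef]; field_simp; ring
      nlinarith
  · rintro ⟨x, y, z⟩ ⟨hxy, hz⟩
    simp only [attainSet, Set.mem_setOf_eq] at hxy hz ⊢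
    refine ⟨hxy, le_trans hz ?_⟩
    have hs : 0 ≤ x ^ 2 - y ^ 2 := by nlinarith [sq_abs y, abs_nonneg y]
    exact key_mono hs h₁ (le_of_lt h₂)
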